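/- Let m, n ≥ 1 be positive integers and R = R_1 × ⋯ × R_m × F_1 × ⋯ × F_n, where each R_i is a commutative Artinian local principal ideal ring that is not a field and each F_j is a field. Let A_0 be the set of non-trivial ideals of R all of whose m + n components are non-zero. Then any two distinct members of A_0 are mutually maximally distant in G(R), no member of A_0 is mutually maximally distant from any non-trivial ideal outside A_0, and the subgraph of the strong resolving graph G(R)_SR induced on the non-trivial ideals having at least one zero component is connected. -/

import Mathlib

open SimpleGraph

/-- The type of non-trivial ideals of a commutative ring `R`
(ideals `I` with `I ≠ 0` and `I ≠ R`). -/
abbrev NontrivialIdeal (R : Type*) [CommRing R] : Type _ :=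
  {I : Ideal R // I ≠ ⊥ ∧ I ≠ ⊤}

/-- The intersection graph of ideals of `R`: vertices are the non-trivial ideals,
and distinct vertices are adjacent iff their intersection is non-zero. -/
def intersectionGraph (R : Type*) [CommRing R] : SimpleGraph (NontrivialIdeal R) where
  Adj I J := I ≠ J ∧ I.1 ⊓ J.1 ≠ ⊥
  symm := ⟨fun I J h => ⟨h.1.symm, by rw [inf_comm]; exact h.2⟩⟩
  loopless := ⟨fun I h => h.1 rfl⟩

/-- Two distinct vertices `u, v` are mutually maximally distant if
`d(v,w) ≤ d(u,v)` for every neighbour `w` of `u` and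
`d(u,w) ≤ d(u,v)` for every neighbour `w` of `v`. -/
def MutuallyMaximallyDistant {V : Type*} (G : SimpleGraph V) (u v : V) : Prop :=
  u ≠ v ∧ (∀ w, G.Adj u w → G.edist v w ≤ G.edist u v) ∧
    (∀ w, G.Adj v w → G.edist u w ≤ G.edist u v)

theorem MutuallyMaximallyDistant.symm {V : Type*} {G : SimpleGraph V} {u v : V}
    (h : MutuallyMaximallyDistant G u v) : MutuallyMaximallyDistant G v u :=
  ⟨h.1.symm,
    fun w hw => by rw [show G.edist v u = G.edist u v from G.edist_comm]; exact h.2.2 w hw,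
    fun w hw => by rw [show G.edist v u = G.edist u v from G.edist_comm]; exact h.2.1 w hw⟩

/-- The strong resolving graph of `G`: `u` and `v` are adjacent iff they are
mutually maximally distant. -/
def strongResolvingGraph {V : Type*} (G : SimpleGraph V) : SimpleGraph V where
  Adj := MutuallyMaximallyDistant G
  symm := ⟨fun _ _ h => h.symm⟩
  loopless := ⟨fun _ h => h.1 rfl⟩

/-- A vertex `w` strongly resolves `u` and `v` if `d(w,u) = d(w,v) + d(v,u)` or
`d(w,v) = d(w,u) + d(u,v)`. A set `W` is a strong resolving set if every two distinct
vertices are strongly resolved by some member of `W`. -/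
def IsStrongResolvingSet {V : Type*} (G : SimpleGraph V) (W : Set V) : Prop :=
  ∀ u v : V, u ≠ v → ∃ w ∈ W,
    G.edist w u = G.edist w v + G.edist v u ∨ G.edist w v = G.edist w u + G.edist u v

/-- The product ideal which is `Rᵢ` in the components where `I` is zero and `0` elsewhere. -/
def complIdeal {ι : Type*} (F : ι → Type*) [∀ i, CommRing (F i)] (I : Ideal (∀ i, F i)) :
    Ideal (∀ i, F i) where
  carrier := {x | ∀ i, I.map (Pi.evalRingHom F i) ≠ ⊥ → x i = 0}
  zero_mem' := fun i _ => rfl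
  add_mem' := fun hx hy i hi => by
    simp only [Pi.add_apply, hx i hi, hy i hi, add_zero]
  smul_mem' := fun c x hx i hi => by
    simp only [Pi.smul_apply, smul_eq_mul, Pi.mul_apply, hx i hi, mul_zero]


set_option linter.unusedSectionVars false

section PiIdeal

variable {ι : Type*} [DecidableEq ι] (F : ι → Type*) [∀ i, CommRing (F i)]

theorem apply_mem_map_eval {I : Ideal (∀ i, F i)} {x : ∀ i, F i} (hx : x ∈ I) (k : ι) :
    x k ∈ I.map (Pi.evalRingHom F k) :=
  Ideal.mem_map_of_mem _ hx

theorem single_mem_of_mem_map {I : Ideal (∀ i, F i)} {k : ι} {y : F k}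
    (hy : y ∈ I.map (Pi.evalRingHom F k)) : Pi.single k y ∈ I := by
  obtain ⟨x, hx, rfl⟩ := Ideal.mem_map_iff_of_surjective _ (Function.surjective_eval k) |>.1 hy
  have h : Pi.single k (x k) = Pi.single k (1 : F k) * x := by
    funext j
    by_cases h : j = k
    · subst h; simp
    · simp [Pi.single_eq_of_ne h]
  show Pi.single k (x k) ∈ I
  rw [h]
  exact I.mul_mem_left _ hx

theorem map_eval_eq_bot_iff {I : Ideal (∀ i, F i)} {k : ι} :
    I.map (Pi.evalRingHom F k) = ⊥ ↔ ∀ x ∈ I, x k = 0 := by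
  constructor
  · intro h x hx
    have := apply_mem_map_eval F hx k
    rw [h] at this
    exact this
  · intro h
    rw [Ideal.map_eq_bot_iff_le_ker]
    intro x hx
    exact h x hx

theorem exists_map_eval_ne_bot {I : Ideal (∀ i, F i)} (hI : I ≠ ⊥) :
    ∃ k, I.map (Pi.evalRingHom F k) ≠ ⊥ := by
  by_contra h
  push_neg at h
  apply hI
  rw [eq_bot_iff]
  intro x hx
  have : x = 0 := funext fun k => (map_eval_eq_bot_iff F).1 (h k) x hx
  simp [this]

/-- The product of a family of ideals, as an ideal of the product ring. -/
def piIdeal (J : ∀ i, Ideal (F i)) : Ideal (∀ i, F i) where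
  carrier := {x | ∀ i, x i ∈ J i}
  zero_mem' := fun i => (J i).zero_mem
  add_mem' := fun hx hy i => (J i).add_mem (hx i) (hy i)
  smul_mem' := fun c x hx i => by
    have := (J i).mul_mem_left (c i) (hx i)
    simpa using this

theorem mem_piIdeal_iff {J : ∀ i, Ideal (F i)} {x : ∀ i, F i} :
    x ∈ piIdeal F J ↔ ∀ i, x i ∈ J i := Iff.rfl

end PiIdeal

/-- In a local Artinian principal ideal ring which is not a field, there is a nonzero
element contained in every nonzero ideal. -/
theorem exists_socle_elem (R : Type*) [CommRing R] [IsArtinianRing R] [IsLocalRing R]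
    [IsPrincipalIdealRing R] (hnf : ¬ IsField R) :
    ∃ s : R, s ≠ 0 ∧ ∀ I : Ideal R, I ≠ ⊥ → s ∈ I := by
  classical
  obtain ⟨t, ht'⟩ := Submodule.IsPrincipal.principal (IsLocalRing.maximalIdeal R)
  have ht : IsLocalRing.maximalIdeal R = Ideal.span {t} := ht'
  have hM0 : IsLocalRing.maximalIdeal R ≠ ⊥ :=
    fun h => hnf (IsLocalRing.isField_iff_maximalIdeal_eq.mpr h)
  have ht0 : t ≠ 0 := by
    rintro rfl
    exact hM0 (by simp [ht])
  -- nilpotency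
  have hnil : ∃ e, t ^ e = 0 := by
    obtain ⟨e, he⟩ := IsArtinianRing.isNilpotent_jacobson_bot (R := R)
    refine ⟨e, ?_⟩
    rw [IsLocalRing.jacobson_eq_maximalIdeal ⊥ bot_ne_top, ht,
      Ideal.span_singleton_pow] at he
    exact Ideal.span_singleton_eq_bot.mp he
  set N := Nat.find hnil with hN
  have htN : t ^ N = 0 := Nat.find_spec hnil
  have hNpos : 0 < N := by
    rcases Nat.eq_zero_or_pos N with h | h
    · exfalso
      rw [h, pow_zero] at htN
      exact one_ne_zero htN
    · exact h
  have hs0 : t ^ (N - 1) ≠ 0 := Nat.find_min hnil (by omega)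
  refine ⟨t ^ (N - 1), hs0, fun I hI => ?_⟩
  obtain ⟨x, hxI, hx0⟩ := Submodule.ne_bot_iff I |>.1 hI
  have hMN : IsLocalRing.maximalIdeal R ^ N = ⊥ := by
    rw [ht, Ideal.span_singleton_pow, htN, Ideal.span_singleton_eq_bot]
  have hex : ∃ c, x ∉ IsLocalRing.maximalIdeal R ^ c := ⟨N, by rw [hMN]; simpa using hx0⟩
  set c := Nat.find hex with hc
  have hcpos : 0 < c := by
    rcases Nat.eq_zero_or_pos c with h | h
    · exfalso
      exact Nat.find_spec hex (by rw [← hc, h, pow_zero, Ideal.one_eq_top]; trivial)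
    · exact h
  set k := c - 1 with hk
  have hxk : x ∈ IsLocalRing.maximalIdeal R ^ k := by
    by_contra h
    exact absurd (Nat.find_min hex (m := k) (by omega)) (by simpa using h)
  have hxk1 : x ∉ IsLocalRing.maximalIdeal R ^ (k + 1) := by
    have : k + 1 = c := by omega
    rw [this]
    exact Nat.find_spec hex
  have hkN : k < N := by
    by_contra h
    push_neg at h
    have : IsLocalRing.maximalIdeal R ^ k ≤ IsLocalRing.maximalIdeal R ^ N :=
      Ideal.pow_le_pow_right h
    rw [hMN] at this
    exact hx0 (by simpa using this hxk)
  -- x = t^k * y with y a unit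
  rw [ht, Ideal.span_singleton_pow, Ideal.mem_span_singleton] at hxk
  obtain ⟨y, hy⟩ := hxk
  have hyu : IsUnit y := by
    by_contra hyu
    apply hxk1
    have hyM : y ∈ IsLocalRing.maximalIdeal R := hyu
    rw [ht, Ideal.mem_span_singleton] at hyM
    obtain ⟨z, rfl⟩ := hyM
    rw [ht, Ideal.span_singleton_pow, Ideal.mem_span_singleton]
    exact ⟨z, by rw [hy]; ring⟩
  obtain ⟨u, rfl⟩ := hyu
  have htk : t ^ k ∈ I := by
    have : t ^ k = ↑u⁻¹ * x := by
      rw [hy]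
      rw [mul_comm (t ^ k), ← mul_assoc]
      simp
    rw [this]
    exact I.mul_mem_left _ hxI
  have : t ^ (N - 1) = t ^ (N - 1 - k) * t ^ k := by
    rw [← pow_add]
    congr 1
    omega
  rw [this]
  exact I.mul_mem_left _ htk

theorem statement16 (m n : ℕ) (hm : 1 ≤ m) (hn : 1 ≤ n)
    (A : Fin m ⊕ Fin n → Type*) [∀ k, CommRing (A k)]
    (hart : ∀ i : Fin m, IsArtinianRing (A (Sum.inl i)))
    (hloc : ∀ i : Fin m, IsLocalRing (A (Sum.inl i)))
    (hpir : ∀ i : Fin m, IsPrincipalIdealRing (A (Sum.inl i)))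
    (hnf : ∀ i : Fin m, ¬ IsField (A (Sum.inl i)))
    (hfield : ∀ j : Fin n, IsField (A (Sum.inr j)))
    (A0 : Set (NontrivialIdeal (∀ k, A k)))
    (hA0 : A0 = {I | ∀ k, I.1.map (Pi.evalRingHom A k) ≠ ⊥}) :
    (∀ I ∈ A0, ∀ J ∈ A0, I ≠ J →
        MutuallyMaximallyDistant (intersectionGraph (∀ k, A k)) I J) ∧
      (∀ I ∈ A0, ∀ J ∉ A0,
        ¬ MutuallyMaximallyDistant (intersectionGraph (∀ k, A k)) I J) ∧
      ((strongResolvingGraph (intersectionGraph (∀ k, A k))).induce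
        {I : NontrivialIdeal (∀ k, A k) | ∃ k, I.1.map (Pi.evalRingHom A k) = ⊥}).Connected := by
  classical
  set G := intersectionGraph (∀ k, A k) with hG
  -- basic nontriviality of the components
  have ntr : ∀ k, (1 : A k) ≠ 0 := by
    rintro (i | j)
    · haveI := hloc i; exact one_ne_zero
    · haveI : Nontrivial (A (Sum.inr j)) := ⟨(hfield j).exists_pair_ne⟩
      exact one_ne_zero
  -- socle elements
  have socle : ∀ k, ∃ s : A k, s ≠ 0 ∧ ∀ I : Ideal (A k), I ≠ ⊥ → s ∈ I := by
    rintro (i | j)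
    · haveI := hart i; haveI := hloc i; haveI := hpir i
      exact exists_socle_elem _ (hnf i)
    · refine ⟨1, ntr _, fun I hI => ?_⟩
      obtain ⟨x, hxI, hx0⟩ := Submodule.ne_bot_iff I |>.1 hI
      obtain ⟨y, hy⟩ := (hfield j).mul_inv_cancel hx0
      have h1 : (1 : A (Sum.inr j)) = y * x := by rw [mul_comm, hy]
      rw [h1]
      exact I.mul_mem_left y hxI
  choose s hs0 hsmem using socle
  -- adjacency criterion
  have adj_of : ∀ I J : NontrivialIdeal (∀ k, A k), I ≠ J →
      (∃ k, I.1.map (Pi.evalRingHom A k) ≠ ⊥ ∧ J.1.map (Pi.evalRingHom A k) ≠ ⊥) →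
      G.Adj I J := by
    rintro I J hne ⟨k, hIk, hJk⟩
    refine ⟨hne, fun hbot => ?_⟩
    have h1 : Pi.single k (s k) ∈ I.1 := single_mem_of_mem_map A (hsmem k _ hIk)
    have h2 : Pi.single k (s k) ∈ J.1 := single_mem_of_mem_map A (hsmem k _ hJk)
    have h3 : Pi.single k (s k) ∈ I.1 ⊓ J.1 := ⟨h1, h2⟩
    rw [hbot] at h3
    have h4 : Pi.single k (s k) = 0 := (Submodule.mem_bot _).1 h3
    have h5 := congrFun h4 k
    rw [Pi.single_eq_same] at h5
    exact hs0 k h5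
  -- distinguished indices
  set i0 : Fin m := ⟨0, hm⟩ with hi0
  set j0 : Fin n := ⟨0, hn⟩ with hj0
  -- the full-support vertex P
  set Pid : Ideal (∀ k, A k) := piIdeal A (fun k => Ideal.span {s k}) with hPid
  have hsP : ∀ k, Pi.single k (s k) ∈ Pid := by
    intro k
    intro i
    by_cases h : i = k
    · subst h; rw [Pi.single_eq_same]; exact Ideal.mem_span_singleton_self _
    · rw [Pi.single_eq_of_ne h]; exact zero_mem _
  have hPproj : ∀ k, Pid.map (Pi.evalRingHom A k) ≠ ⊥ := by
    intro k h
    have := (map_eval_eq_bot_iff A).1 h _ (hsP k)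
    rw [Pi.single_eq_same] at this
    exact hs0 k this
  have hPbot : Pid ≠ ⊥ := by
    intro h
    have := (Submodule.mem_bot _).1 (h ▸ hsP (Sum.inl i0))
    have h5 := congrFun this (Sum.inl i0)
    rw [Pi.single_eq_same] at h5
    exact hs0 _ h5
  have hPtop : Pid ≠ ⊤ := by
    intro h
    haveI := hloc i0
    have hM0 : IsLocalRing.maximalIdeal (A (Sum.inl i0)) ≠ ⊥ :=
      fun hb => hnf i0 (IsLocalRing.isField_iff_maximalIdeal_eq.mpr hb)
    have hmem : (1 : ∀ k, A k) ∈ Pid := h ▸ Submodule.mem_top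
    have h1 : (1 : A (Sum.inl i0)) ∈ Ideal.span {s (Sum.inl i0)} := hmem (Sum.inl i0)
    have h2 : Ideal.span {s (Sum.inl i0)} ≤ IsLocalRing.maximalIdeal (A (Sum.inl i0)) :=
      Ideal.span_le.2 (by simpa using hsmem _ _ hM0)
    exact (IsLocalRing.maximalIdeal.isMaximal _).ne_top (Ideal.eq_top_iff_one _ |>.2 (h2 h1))
  set Pv : NontrivialIdeal (∀ k, A k) := ⟨Pid, hPbot, hPtop⟩ with hPv
  have adjP : ∀ w : NontrivialIdeal (∀ k, A k), w ≠ Pv → G.Adj Pv w := by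
    intro w hw
    obtain ⟨k, hk⟩ := exists_map_eval_ne_bot A w.2.1
    exact adj_of _ _ (Ne.symm hw) ⟨k, hPproj k, hk⟩
  have edist_le_one : ∀ u v : NontrivialIdeal (∀ k, A k), G.Adj u v → G.edist u v ≤ 1 :=
    fun u v h => le_of_eq (SimpleGraph.edist_eq_one_iff_adj.mpr h)
  have diam2 : ∀ u v : NontrivialIdeal (∀ k, A k), G.edist u v ≤ 2 := by
    intro u v
    by_cases h : u = v
    · subst h; simp [SimpleGraph.edist_self]
    by_cases hu : u = Pv
    · subst hu
      exact le_trans (edist_le_one _ _ (adjP v (Ne.symm h))) (by norm_num)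
    by_cases hv : v = Pv
    · subst hv
      exact le_trans (edist_le_one _ _ (adjP u hu).symm) (by norm_num)
    calc G.edist u v ≤ G.edist u Pv + G.edist Pv v := SimpleGraph.edist_triangle
      _ ≤ 1 + 1 := add_le_add (edist_le_one _ _ (adjP u hu).symm) (edist_le_one _ _ (adjP v hv))
      _ = 2 := by norm_num
  have edist_ge_two : ∀ u v : NontrivialIdeal (∀ k, A k), u ≠ v → ¬ G.Adj u v →
      2 ≤ G.edist u v := by
    intro u v hne hadj
    have h1 : G.edist u v ≠ 0 := fun h => hne (SimpleGraph.edist_eq_zero_iff.1 h)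
    have h2 : G.edist u v ≠ 1 := fun h => hadj (SimpleGraph.edist_eq_one_iff_adj.1 h)
    have hlt : 1 < G.edist u v :=
      lt_of_le_of_ne (ENat.one_le_iff_ne_zero.mpr h1) (Ne.symm h2)
    exact Order.add_one_le_of_lt hlt
  -- Part 1
  have part1 : ∀ I ∈ A0, ∀ J ∈ A0, I ≠ J → MutuallyMaximallyDistant G I J := by
    intro I hI J hJ hne
    rw [hA0] at hI hJ
    have hadj : G.Adj I J := adj_of I J hne ⟨Sum.inl i0, hI _, hJ _⟩
    have h1 : G.edist I J = 1 := SimpleGraph.edist_eq_one_iff_adj.mpr hadj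
    have key : ∀ (K : NontrivialIdeal (∀ k, A k)), (∀ k, K.1.map (Pi.evalRingHom A k) ≠ ⊥) →
        ∀ w : NontrivialIdeal (∀ k, A k), G.edist K w ≤ 1 := by
      intro K hK w
      by_cases h : K = w
      · subst h; simp [SimpleGraph.edist_self]
      · obtain ⟨k, hk⟩ := exists_map_eval_ne_bot A w.2.1
        exact edist_le_one _ _ (adj_of K w h ⟨k, hK k, hk⟩)
    exact ⟨hne, fun w _ => by rw [h1]; exact key J hJ w, fun w _ => by rw [h1]; exact key I hI w⟩
  -- Part 2
  have part2 : ∀ I ∈ A0, ∀ J ∉ A0, ¬ MutuallyMaximallyDistant G I J := by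
    intro I hI J hJ hmmd
    rw [hA0] at hI hJ
    simp only [Set.mem_setOf_eq, not_forall, not_not] at hJ
    obtain ⟨k0, hk0⟩ := hJ
    obtain ⟨i1, hi1⟩ := exists_map_eval_ne_bot A J.2.1
    set W : Ideal (∀ k, A k) := complIdeal A J.1 with hW
    have hWmem : ∀ x : ∀ k, A k, x ∈ W ↔
        ∀ i, J.1.map (Pi.evalRingHom A i) ≠ ⊥ → x i = 0 := fun x => Iff.rfl
    have hW1 : Pi.single k0 (1 : A k0) ∈ W := by
      intro i hi
      by_cases h : i = k0
      · subst h; exact absurd hk0 hi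
      · exact Pi.single_eq_of_ne h 1
    have hWbot : W ≠ ⊥ := by
      intro h
      have := (Submodule.mem_bot _).1 (h ▸ hW1)
      have h5 := congrFun this k0
      rw [Pi.single_eq_same] at h5
      exact ntr k0 h5
    have hWtop : W ≠ ⊤ := by
      intro h
      have hmem : (1 : ∀ k, A k) ∈ W := h ▸ Submodule.mem_top
      exact ntr i1 (hmem i1 hi1)
    set Wv : NontrivialIdeal (∀ k, A k) := ⟨W, hWbot, hWtop⟩ with hWv
    have hinf : J.1 ⊓ W = ⊥ := by
      rw [eq_bot_iff]
      rintro x ⟨hxJ, hxW⟩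
      have : x = 0 := by
        funext i
        by_cases h : J.1.map (Pi.evalRingHom A i) = ⊥
        · exact (map_eval_eq_bot_iff A).1 h x hxJ
        · exact hxW i h
      simp [this]
    have hWproj : W.map (Pi.evalRingHom A i1) = ⊥ :=
      (map_eval_eq_bot_iff A).2 fun x hx => hx i1 hi1
    have hIW : I ≠ Wv := by
      intro h
      apply hI i1
      rw [h]
      exact hWproj
    have hJW : (J : NontrivialIdeal (∀ k, A k)) ≠ Wv := by
      intro h
      apply J.2.1
      have : J.1 ⊓ W = J.1 := by
        rw [show W = J.1 from congrArg Subtype.val h.symm, inf_idem]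
      rw [← this, hinf]
    have hadjIW : G.Adj I Wv := by
      refine adj_of I Wv hIW ⟨k0, hI k0, ?_⟩
      intro h
      have := (map_eval_eq_bot_iff A).1 h _ hW1
      rw [Pi.single_eq_same] at this
      exact ntr k0 this
    have hnadjJW : ¬ G.Adj J Wv := fun h => h.2 hinf
    have hIJ : G.edist I J = 1 :=
      SimpleGraph.edist_eq_one_iff_adj.mpr (adj_of I J hmmd.1 ⟨i1, hI i1, hi1⟩)
    have hle := hmmd.2.1 Wv hadjIW
    rw [hIJ] at hle
    have hge := edist_ge_two J Wv hJW hnadjJW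
    have : (2 : ℕ∞) ≤ 1 := le_trans hge hle
    norm_num at this
  -- Part 3
  have mmd_of_bot : ∀ u v : NontrivialIdeal (∀ k, A k), u ≠ v → u.1 ⊓ v.1 = ⊥ →
      MutuallyMaximallyDistant G u v := by
    intro u v hne hbot
    have h2 : 2 ≤ G.edist u v := edist_ge_two u v hne (fun h => h.2 hbot)
    exact ⟨hne, fun w _ => le_trans (diam2 v w) h2, fun w _ => le_trans (diam2 u w) h2⟩
  -- supported ideals
  have hk' : ∀ k : Fin m ⊕ Fin n, ∃ k', k' ≠ k := by
    rintro (i | j)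
    · exact ⟨Sum.inr j0, by simp⟩
    · exact ⟨Sum.inl i0, by simp⟩
  set Sid : (Fin m ⊕ Fin n) → Ideal (∀ k, A k) :=
    fun k => piIdeal A (fun i => if i = k then ⊤ else ⊥) with hSid
  have hSmem : ∀ k x, x ∈ Sid k ↔ ∀ i, x i ∈ (if i = k then (⊤ : Ideal (A i)) else ⊥) :=
    fun k x => Iff.rfl
  have hS1 : ∀ k, Pi.single k (1 : A k) ∈ Sid k := by
    intro k i
    by_cases h : i = k
    · subst h; simp
    · simp [h]
  have hSzero : ∀ k x, x ∈ Sid k → ∀ i, i ≠ k → x i = 0 := by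
    intro k x hx i hi
    have := hx i
    simp only [if_neg hi] at this
    exact (Submodule.mem_bot _).1 this
  have hSbot : ∀ k, Sid k ≠ ⊥ := by
    intro k h
    have := (Submodule.mem_bot _).1 (h ▸ hS1 k)
    have h5 := congrFun this k
    rw [Pi.single_eq_same] at h5
    exact ntr k h5
  have hStop : ∀ k, Sid k ≠ ⊤ := by
    intro k h
    obtain ⟨k', hkk'⟩ := hk' k
    have hmem : (1 : ∀ i, A i) ∈ Sid k := h ▸ Submodule.mem_top
    exact ntr k' (hSzero k _ hmem k' hkk')
  have hSprojbot : ∀ k k', k' ≠ k → (Sid k).map (Pi.evalRingHom A k') = ⊥ :=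
    fun k k' h => (map_eval_eq_bot_iff A).2 fun x hx => hSzero k x hx k' h
  have hSprojk : ∀ k, (Sid k).map (Pi.evalRingHom A k) ≠ ⊥ := by
    intro k h
    have := (map_eval_eq_bot_iff A).1 h _ (hS1 k)
    rw [Pi.single_eq_same] at this
    exact ntr k this
  set B : Set (NontrivialIdeal (∀ k, A k)) :=
    {I : NontrivialIdeal (∀ k, A k) | ∃ k, I.1.map (Pi.evalRingHom A k) = ⊥} with hB
  have hSvB : ∀ k, (⟨Sid k, hSbot k, hStop k⟩ : NontrivialIdeal (∀ k, A k)) ∈ B := by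
    intro k
    obtain ⟨k', hkk'⟩ := hk' k
    exact ⟨k', hSprojbot k k' hkk'⟩
  -- u with zero projection at ku is SR-adjacent to Sid ku
  have step : ∀ (u : NontrivialIdeal (∀ k, A k)) (ku : Fin m ⊕ Fin n),
      u.1.map (Pi.evalRingHom A ku) = ⊥ →
      MutuallyMaximallyDistant G u ⟨Sid ku, hSbot ku, hStop ku⟩ := by
    intro u ku hku
    have hne : u ≠ ⟨Sid ku, hSbot ku, hStop ku⟩ := by
      intro h
      apply hSprojk ku
      rw [show Sid ku = u.1 from congrArg Subtype.val h.symm, hku]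
    refine mmd_of_bot _ _ hne ?_
    rw [eq_bot_iff]
    rintro x ⟨hxu, hxS⟩
    have : x = 0 := by
      funext i
      by_cases h : i = ku
      · subst h
        exact (map_eval_eq_bot_iff A).1 hku x hxu
      · exact hSzero ku x hxS i h
    simp [this]
  have part3 : ((strongResolvingGraph G).induce B).Connected := by
    rw [SimpleGraph.connected_iff]
    refine ⟨?_, ⟨⟨⟨Sid (Sum.inl i0), hSbot _, hStop _⟩, hSvB _⟩⟩⟩
    rintro ⟨u, hu⟩ ⟨v, hv⟩
    obtain ⟨ku, hku⟩ := hu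
    obtain ⟨kv, hkv⟩ := hv
    have h1 : ((strongResolvingGraph G).induce B).Adj ⟨u, ⟨ku, hku⟩⟩
        ⟨⟨Sid ku, hSbot ku, hStop ku⟩, hSvB ku⟩ := step u ku hku
    have h2 : ((strongResolvingGraph G).induce B).Adj ⟨v, ⟨kv, hkv⟩⟩
        ⟨⟨Sid kv, hSbot kv, hStop kv⟩, hSvB kv⟩ := step v kv hkv
    by_cases h : ku = kv
    · subst h
      exact (h1.reachable).trans h2.reachable.symm
    · have h3 : ((strongResolvingGraph G).induce B).Adj
          ⟨⟨Sid ku, hSbot ku, hStop ku⟩, hSvB ku⟩ ⟨⟨Sid kv, hSbot kv, hStop kv⟩, hSvB kv⟩ := by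
        have hne : (⟨Sid ku, hSbot ku, hStop ku⟩ : NontrivialIdeal (∀ k, A k)) ≠
            ⟨Sid kv, hSbot kv, hStop kv⟩ := by
          intro hh
          apply hSprojk ku
          rw [show Sid ku = Sid kv from congrArg Subtype.val hh]
          exact hSprojbot kv ku h
        refine mmd_of_bot _ _ hne ?_
        rw [eq_bot_iff]
        rintro x ⟨hx1, hx2⟩
        have : x = 0 := by
          funext i
          by_cases hi : i = ku
          · subst hi
            exact hSzero kv x hx2 i (h ∘ id)
          · exact hSzero ku x hx1 i hi
        simp [this]
      exact (h1.reachable).trans (h3.reachable.trans h2.reachable.symm)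
  exact ⟨part1, part2, part3⟩
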